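/- arXiv:2009.10857 — 2 statements merged into one kernel-verified Lean document; each statement's English description precedes it below -/
import Mathlib

section
/- For 1 ≤ L < N, μ_{L,N} ≤ 2^L, where μ_{L,N} is the maximum of ‖x_1 ∧ ⋯ ∧ x_L‖_1 over points x_ℓ in the Schinzel unit ball K_N. Moreover, if 2L ≤ N then μ_{L,N} = 2^L. -/
open Finset in
/-- The Schinzel norm `δ(x) = max{Σ xₘ⁺, Σ xₙ⁻}` on `ℝ^N`. -/
noncomputable def schinzelDelta {N : ℕ} (x : Fin N → ℝ) : ℝ :=
  max (∑ m, max (x m) 0) (∑ n, max (-(x n)) 0)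

/-- The set `E_N = {±e_m}` of signed standard basis vectors. -/
def schE (N : ℕ) : Set (Fin N → ℝ) :=
  {x | ∃ m, x = Pi.single m 1 ∨ x = -Pi.single m 1}

/-- The set `F_N = {e_m − e_n : m ≠ n}`. -/
def schF (N : ℕ) : Set (Fin N → ℝ) :=
  {x | ∃ m n, m ≠ n ∧ x = Pi.single m 1 - Pi.single n 1}

open Finset in
/-- The `ℓ¹`-norm of the exterior product `x₁ ∧ ⋯ ∧ x_L`: the sum, over all
`L`-element subsets `I ⊆ {1,…,N}`, of the absolute values of the `L×L` minors
(rows indexed by `I`) of the `N×L` matrix with columns `x₁,…,x_L`. -/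
noncomputable def wedgeL1 {N L : ℕ} (x : Fin L → Fin N → ℝ) : ℝ :=
  ∑ I : Finset (Fin N), if h : I.card = L then
    |(Matrix.of fun i j => x j ((I.orderIsoOfFin h i : Fin N))).det| else 0


open Finset

lemma sch_l1 {N : ℕ} (x : Fin N → ℝ) (h : schinzelDelta x ≤ 1) : ∑ k, |x k| ≤ 2 := by
  have key : ∀ k, |x k| = max (x k) 0 + max (-(x k)) 0 := by
    intro k; rcases le_total 0 (x k) with h | h
    · rw [abs_of_nonneg h, max_eq_left h, max_eq_right (by linarith), add_zero]
    · rw [abs_of_nonpos h, max_eq_right h, max_eq_left (by linarith), zero_add]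
  simp only [key, Finset.sum_add_distrib]
  have h1 := le_trans (le_max_left _ _) h
  have h2 := le_trans (le_max_right _ _) h
  linarith

lemma det_abs_le {L : ℕ} (M : Matrix (Fin L) (Fin L) ℝ) :
    |M.det| ≤ ∑ σ : Equiv.Perm (Fin L), ∏ i, |M (σ i) i| := by
  rw [Matrix.det_apply']
  refine le_trans (Finset.abs_sum_le_sum_abs _ _) (Finset.sum_le_sum fun σ _ => ?_)
  rw [abs_mul, Finset.abs_prod]
  rcases Int.units_eq_one_or (Equiv.Perm.sign σ) with h | h <;> simp [h]

lemma upper_bound {N L : ℕ} (x : Fin L → Fin N → ℝ)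
    (hx : ∀ l, schinzelDelta (x l) ≤ 1) : wedgeL1 x ≤ 2 ^ L := by
  classical
  set T : Finset (Finset (Fin N)) := univ.filter (fun I => I.card = L) with hT
  have hcard : ∀ p : {I // I ∈ T}, (p : Finset (Fin N)).card = L := by
    intro p; exact (mem_filter.mp p.2).2
  set emb : {I // I ∈ T} → Fin L → Fin N :=
    fun p => (p : Finset (Fin N)).orderEmbOfFin (hcard p) with hemb
  set H : (Fin L → Fin N) → ℝ := fun f => ∏ i, |x i (f i)| with hH
  set Fs : {I // I ∈ T} → Finset (Fin L → Fin N) :=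
    fun p => univ.image (fun σ : Equiv.Perm (Fin L) => emb p ∘ σ) with hFs
  have step1 : wedgeL1 x = ∑ I ∈ T, if h : I.card = L then
      |(Matrix.of fun i j => x j ((I.orderIsoOfFin h i : Fin N))).det| else 0 := by
    rw [wedgeL1]
    refine (Finset.sum_filter_of_ne ?_).symm
    intro I _ hne
    by_contra hc
    exact hne (dif_neg hc)
  have imemb : ∀ p, Function.Injective (emb p) := fun p =>
    ((p : Finset (Fin N)).orderEmbOfFin (hcard p)).injective
  have himage : ∀ p f, f ∈ Fs p → univ.image f = (p : Finset (Fin N)) := by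
    intro p f hf
    rw [hFs] at hf
    obtain ⟨σ, _, rfl⟩ := mem_image.mp hf
    have : (univ : Finset (Fin L)).image (emb p ∘ σ)
        = (univ : Finset (Fin L)).image (emb p) := by
      rw [← Finset.image_image]
      congr 1
      exact Finset.image_univ_equiv σ
    rw [this]
    apply Finset.coe_inj.mp
    rw [Finset.coe_image, Finset.coe_univ, Set.image_univ]
    exact Finset.range_orderEmbOfFin _ _
  calc wedgeL1 x = ∑ p ∈ T.attach, (if h : (p : Finset (Fin N)).card = L then
        |(Matrix.of fun i j => x j (((p : Finset (Fin N)).orderIsoOfFin h i : Fin N))).det|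
        else 0) := by rw [step1, ← Finset.sum_attach]
    _ ≤ ∑ p ∈ T.attach, ∑ f ∈ Fs p, H f := by
        refine Finset.sum_le_sum fun p _ => ?_
        rw [dif_pos (hcard p)]
        refine le_trans (det_abs_le _) (le_of_eq ?_)
        rw [hFs]
        rw [Finset.sum_image (by
          intro a _ b _ hab
          exact Equiv.ext fun i => imemb p (congrFun hab i))]
        refine Finset.sum_congr rfl fun σ _ => ?_
        refine Finset.prod_congr rfl fun i _ => ?_
        simp [Matrix.of_apply, hH, Finset.coe_orderIsoOfFin_apply, hemb]
    _ = ∑ f ∈ T.attach.biUnion Fs, H f := by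
        refine (Finset.sum_biUnion ?_).symm
        intro p _ q _ hpq
        refine Finset.disjoint_left.mpr fun f hfp hfq => ?_
        exact hpq (Subtype.ext ((himage p f hfp).symm.trans (himage q f hfq)))
    _ ≤ ∑ f : Fin L → Fin N, H f := by
        refine Finset.sum_le_sum_of_subset_of_nonneg (Finset.subset_univ _) ?_
        intro f _ _
        exact Finset.prod_nonneg fun i _ => abs_nonneg _
    _ = ∏ i, ∑ k, |x i k| := by
        rw [Finset.prod_univ_sum]
        rw [Fintype.piFinset_univ]
    _ ≤ ∏ _i : Fin L, (2:ℝ) := by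
        refine Finset.prod_le_prod (fun i _ => Finset.sum_nonneg fun k _ => abs_nonneg _)
          (fun i _ => sch_l1 _ (hx i))
    _ = 2 ^ L := by simp

lemma delta_pair {N : ℕ} (a b : Fin N) (hab : a ≠ b) :
    schinzelDelta ((Pi.single a (1:ℝ) : Fin N → ℝ) - Pi.single b 1) ≤ 1 := by
  set v : Fin N → ℝ := (Pi.single a (1:ℝ) : Fin N → ℝ) - Pi.single b 1 with hvdef
  have hv : ∀ m, v m = (if m = a then 1 else 0) - (if m = b then 1 else 0) := by
    intro m; simp [hvdef, Pi.single_apply]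
  rw [schinzelDelta]
  have h1 : ∑ m, max (v m) 0 = 1 := by
    have key : ∀ m, max (v m) 0 = if m = a then 1 else 0 := by
      intro m; rw [hv]; split_ifs <;> simp_all
    simp [key]
  have h2 : ∑ m, max (-(v m)) 0 = 1 := by
    have key : ∀ m, max (-(v m)) 0 = if m = b then 1 else 0 := by
      intro m; rw [hv]; split_ifs <;> simp_all
    simp [key]
  rw [h1, h2]; norm_num

lemma wedge_filter {N L : ℕ} (x : Fin L → Fin N → ℝ) :
    wedgeL1 x = ∑ I ∈ univ.filter (fun I : Finset (Fin N) => I.card = L),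
      (if h : I.card = L then
        |(Matrix.of fun i j => x j ((I.orderIsoOfFin h i : Fin N))).det| else 0) := by
  rw [wedgeL1]
  refine (Finset.sum_filter_of_ne ?_).symm
  intro I _ hne
  by_contra hc
  exact hne (dif_neg hc)

lemma lower_bound {N L : ℕ} (hN : 2 * L ≤ N) :
    ∃ x : Fin L → Fin N → ℝ, (∀ l, schinzelDelta (x l) ≤ 1) ∧ wedgeL1 x = 2 ^ L := by
  classical
  have ha : ∀ l : Fin L, 2 * (l : ℕ) < N := fun l => by have := l.isLt; omega
  have hb : ∀ l : Fin L, 2 * (l : ℕ) + 1 < N := fun l => by have := l.isLt; omega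
  set a : Fin L → Fin N := fun l => ⟨2 * l, ha l⟩ with hadef
  set b : Fin L → Fin N := fun l => ⟨2 * l + 1, hb l⟩ with hbdef
  have haval : ∀ l, (a l : ℕ) = 2 * l := fun l => rfl
  have hbval : ∀ l, (b l : ℕ) = 2 * l + 1 := fun l => rfl
  have hab : ∀ l, a l ≠ b l := by
    intro l h
    have := congrArg Fin.val h
    rw [haval, hbval] at this; omega
  set x : Fin L → Fin N → ℝ :=
    fun l => (Pi.single (a l) (1:ℝ) : Fin N → ℝ) - Pi.single (b l) 1 with hxdef
  refine ⟨x, fun l => delta_pair _ _ (hab l), ?_⟩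
  have hxval : ∀ j m, x j m = (if m = a j then 1 else 0) - (if m = b j then 1 else 0) := by
    intro j m; simp [hxdef, Pi.single_apply]
  set ε : Finset (Fin L) → Fin L → Fin N := fun s l => if l ∈ s then b l else a l with hεdef
  have hεval : ∀ s l, (ε s l : ℕ) = 2 * l + (if l ∈ s then 1 else 0) := by
    intro s l; rw [hεdef]; split_ifs with h <;> simp [h, haval, hbval]
  have hεmono : ∀ s, StrictMono (ε s) := by
    intro s l l' h
    rw [Fin.lt_def, hεval, hεval]
    have hll : (l:ℕ) < l' := h
    split_ifs <;> omega
  have hεinj : ∀ s, Function.Injective (ε s) := fun s => (hεmono s).injective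
  set g : Finset (Fin L) → Finset (Fin N) := fun s => univ.image (ε s) with hgdef
  have hgcard : ∀ s, (g s).card = L := by
    intro s
    rw [hgdef]
    rw [Finset.card_image_of_injective _ (hεinj s), card_univ, Fintype.card_fin]
  have hmemb : ∀ s l, b l ∈ g s ↔ l ∈ s := by
    intro s l
    constructor
    · intro h
      obtain ⟨l', _, hl'⟩ := mem_image.mp h
      have hv := congrArg Fin.val hl'
      rw [hεval, hbval] at hv
      have hll : l' = l := by apply Fin.ext; split_ifs at hv <;> omega
      subst hll
      split_ifs at hv with hh
      · exact hh
      · omega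
    · intro h
      exact mem_image.mpr ⟨l, mem_univ l, by rw [hεdef]; simp [h]⟩
  have hginj : Function.Injective g := by
    intro s s' h
    ext l
    rw [← hmemb s l, ← hmemb s' l, h]
  -- main computation
  rw [wedge_filter]
  have hsub : univ.image g ⊆ univ.filter (fun I : Finset (Fin N) => I.card = L) := by
    intro I hI
    obtain ⟨s, _, rfl⟩ := mem_image.mp hI
    exact mem_filter.mpr ⟨mem_univ _, hgcard s⟩
  have hzero : ∀ I ∈ univ.filter (fun I : Finset (Fin N) => I.card = L),
      I ∉ univ.image g → (if h : I.card = L then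
        |(Matrix.of fun i j => x j ((I.orderIsoOfFin h i : Fin N))).det| else 0) = 0 := by
    intro I hIf hInot
    have hI : I.card = L := (mem_filter.mp hIf).2
    rw [dif_pos hI]
    have hj : ∃ j, a j ∉ I ∧ b j ∉ I := by
      by_contra hc
      push_neg at hc
      have hor : ∀ j, a j ∈ I ∨ b j ∈ I := by
        intro j
        by_cases h1 : a j ∈ I
        · exact Or.inl h1
        · exact Or.inr (hc j h1)
      set s := univ.filter (fun j : Fin L => b j ∈ I) with hsdef
      have hgs : g s ⊆ I := by
        intro m hm
        obtain ⟨l, _, rfl⟩ := mem_image.mp hm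
        simp only [hεdef]
        by_cases h1 : l ∈ s
        · rw [if_pos h1]; exact (mem_filter.mp h1).2
        · rw [if_neg h1]
          rcases hor l with h2 | h2
          · exact h2
          · exact absurd (show l ∈ s from mem_filter.mpr ⟨mem_univ l, h2⟩) h1
      have : g s = I := Finset.eq_of_subset_of_card_le hgs (by rw [hI, hgcard])
      exact hInot (mem_image.mpr ⟨s, mem_univ s, this⟩)
    obtain ⟨j, hja, hjb⟩ := hj
    rw [Matrix.det_eq_zero_of_column_eq_zero j, abs_zero]
    intro i
    rw [Matrix.of_apply, hxval]
    have hmem : ((I.orderIsoOfFin hI i : Fin N)) ∈ I := (I.orderIsoOfFin hI i).2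
    have hna : ((I.orderIsoOfFin hI i : Fin N)) ≠ a j := fun h => hja (h ▸ hmem)
    have hnb : ((I.orderIsoOfFin hI i : Fin N)) ≠ b j := fun h => hjb (h ▸ hmem)
    rw [if_neg hna, if_neg hnb, sub_zero]
  rw [← Finset.sum_subset hsub hzero]
  rw [Finset.sum_image (fun s _ s' _ h => hginj h)]
  have hterm : ∀ s : Finset (Fin L), (if h : (g s).card = L then
      |(Matrix.of fun i j => x j (((g s).orderIsoOfFin h i : Fin N))).det| else 0) = 1 := by
    intro s
    rw [dif_pos (hgcard s)]
    have hembeq : ∀ i, ((g s).orderIsoOfFin (hgcard s) i : Fin N) = ε s i := by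
      have := Finset.orderEmbOfFin_unique (f := ε s) (hgcard s)
        (fun i => mem_image.mpr ⟨i, mem_univ i, rfl⟩) (hεmono s)
      intro i
      rw [Finset.coe_orderIsoOfFin_apply, ← this]
    have hmat : (Matrix.of fun i j => x j (((g s).orderIsoOfFin (hgcard s) i : Fin N)))
        = Matrix.diagonal (fun i => if i ∈ s then (-1:ℝ) else 1) := by
      ext i j
      rw [Matrix.of_apply, hembeq, hxval]
      rcases eq_or_ne i j with rfl | hij
      · rw [Matrix.diagonal_apply_eq]
        by_cases hs : i ∈ s
        · simp only [hεdef]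
          rw [if_pos hs, if_pos hs, if_neg (Ne.symm (hab i)), if_pos rfl]
          norm_num
        · simp only [hεdef]
          rw [if_neg hs, if_neg hs, if_pos rfl, if_neg (hab i)]
          norm_num
      · rw [Matrix.diagonal_apply_ne _ hij]
        have h1 : ε s i ≠ a j := by
          intro h
          have := congrArg Fin.val h
          rw [hεval, haval] at this
          have : ¬ ((i:ℕ) = (j:ℕ)) := fun hc => hij (Fin.ext hc)
          split_ifs at * <;> omega
        have h2 : ε s i ≠ b j := by
          intro h
          have := congrArg Fin.val h
          rw [hεval, hbval] at this
          have : ¬ ((i:ℕ) = (j:ℕ)) := fun hc => hij (Fin.ext hc)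
          split_ifs at * <;> omega
        rw [if_neg h1, if_neg h2, sub_zero]
    rw [hmat, Matrix.det_diagonal, Finset.abs_prod]
    have : ∀ i : Fin L, |if i ∈ s then (-1:ℝ) else 1| = 1 := by
      intro i; split_ifs <;> norm_num
    simp [this]
  rw [Finset.sum_congr rfl (fun s _ => hterm s)]
  rw [Finset.sum_const, Finset.card_univ, Fintype.card_finset, Fintype.card_fin]
  simp

/-- For `1 ≤ L < N` the maximum `μ_{L,N}` of `‖x₁ ∧ ⋯ ∧ x_L‖₁` over the Schinzel unit
ball is at most `2^L`; if moreover `2L ≤ N` the value `2^L` is attained. -/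
theorem stmt11 (N L : ℕ) (hL : 1 ≤ L) (hLN : L < N) :
    (∀ x : Fin L → Fin N → ℝ, (∀ l, schinzelDelta (x l) ≤ 1) → wedgeL1 x ≤ 2 ^ L) ∧
    (2 * L ≤ N → ∃ x : Fin L → Fin N → ℝ,
      (∀ l, schinzelDelta (x l) ≤ 1) ∧ wedgeL1 x = 2 ^ L) := by
  exact ⟨fun x hx => upper_bound x hx, fun h => lower_bound h⟩
end

section
/- Let L < N ≤ 2L and let ξ_1, ..., ξ_L be vectors in E_N ∪ F_N. Then ‖ξ_1 ∧ ξ_2 ∧ ⋯ ∧ ξ_L‖_1 ≤ (N/(N−L))^{N−L}. Consequently, for arbitrary vectors x_1,...,x_L in R^N with L < N ≤ 2L, ‖x_1 ∧ ⋯ ∧ x_L‖_1 ≤ (N/(N−L))^{N−L} δ(x_1)⋯δ(x_L). -/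
open Finset

/-! ### Total unimodularity -/

/-- A column is OK if it is zero, ± a standard basis vector, or a difference of two. -/
def ColOK {k : ℕ} (c : Fin k → ℝ) : Prop :=
  c = 0 ∨ (∃ i, c = Pi.single i 1 ∨ c = -Pi.single i 1) ∨
    (∃ i i', i ≠ i' ∧ c = Pi.single i 1 - Pi.single i' 1)

lemma single_comp_dich {k k' : ℕ} {g : Fin k' → Fin k} (hg : Function.Injective g)
    (i : Fin k) :
    (∃ i', g i' = i ∧ (Pi.single i 1 : Fin k → ℝ) ∘ g = Pi.single i' 1) ∨
      ((∀ i', g i' ≠ i) ∧ (Pi.single i 1 : Fin k → ℝ) ∘ g = 0) := by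
  classical
  by_cases h : ∃ i', g i' = i
  · obtain ⟨i', rfl⟩ := h
    refine Or.inl ⟨i', rfl, ?_⟩
    funext a
    simp only [Function.comp_apply, Pi.single_apply]
    by_cases ha : a = i'
    · simp [ha]
    · have : ¬ g a = g i' := fun hh => ha (hg hh)
      simp [ha, this]
  · refine Or.inr ⟨fun i' hh => h ⟨i', hh⟩, ?_⟩
    funext a
    have : ¬ g a = i := fun hh => h ⟨a, hh⟩
    simp [Pi.single_apply, this]

lemma colOK_comp {k k' : ℕ} {c : Fin k → ℝ} (hc : ColOK c) {g : Fin k' → Fin k}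
    (hg : Function.Injective g) : ColOK (c ∘ g) := by
  classical
  rcases hc with rfl | ⟨i, hi | hi⟩ | ⟨i, i', hii, hc⟩
  · exact Or.inl rfl
  · subst hi
    rcases single_comp_dich hg i with ⟨j, _, hj⟩ | ⟨_, hj⟩
    · exact Or.inr (Or.inl ⟨j, Or.inl hj⟩)
    · exact Or.inl hj
  · subst hi
    have hneg : (-Pi.single i 1 : Fin k → ℝ) ∘ g = -((Pi.single i 1 : Fin k → ℝ) ∘ g) := rfl
    rcases single_comp_dich hg i with ⟨j, _, hj⟩ | ⟨_, hj⟩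
    · exact Or.inr (Or.inl ⟨j, Or.inr (by rw [hneg, hj])⟩)
    · exact Or.inl (by rw [hneg, hj]; simp)
  · subst hc
    have hsub : (Pi.single i 1 - Pi.single i' 1 : Fin k → ℝ) ∘ g
        = ((Pi.single i 1 : Fin k → ℝ) ∘ g) - ((Pi.single i' 1 : Fin k → ℝ) ∘ g) := rfl
    rcases single_comp_dich hg i with ⟨j, hji, hj⟩ | ⟨_, hj⟩ <;>
      rcases single_comp_dich hg i' with ⟨j', hji', hj'⟩ | ⟨_, hj'⟩
    · refine Or.inr (Or.inr ⟨j, j', ?_, by rw [hsub, hj, hj']⟩)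
      rintro rfl
      exact hii (hji ▸ hji')
    · exact Or.inr (Or.inl ⟨j, Or.inl (by rw [hsub, hj, hj']; simp)⟩)
    · exact Or.inr (Or.inl ⟨j', Or.inr (by rw [hsub, hj, hj']; simp)⟩)
    · exact Or.inl (by rw [hsub, hj, hj']; simp)

lemma abs_det_submatrix_perm {n : ℕ} (A : Matrix (Fin n) (Fin n) ℝ)
    (e f : Equiv.Perm (Fin n)) : |(A.submatrix e f).det| = |A.det| := by
  have h1 : A.submatrix e f = (A.submatrix e id).submatrix id f := rfl
  rw [h1, Matrix.det_permute' f, Matrix.det_permute e, abs_mul, abs_mul]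
  rcases Int.units_eq_one_or (Equiv.Perm.sign f) with h | h <;>
    rcases Int.units_eq_one_or (Equiv.Perm.sign e) with h' | h' <;>
      simp [h, h']

set_option linter.unnecessarySeqFocus false in
lemma tu_det : ∀ (n : ℕ) (A : Matrix (Fin n) (Fin n) ℝ),
    (∀ j, ColOK (fun i => A i j)) → |A.det| ≤ 1 := by
  intro n
  induction n with
  | zero => intro A _; simp [Matrix.det_isEmpty]
  | succ n ih =>
    intro A hA
    classical
    by_cases h0 : ∃ j, (fun i => A i j) = 0
    · obtain ⟨j, hj⟩ := h0
      rw [Matrix.det_eq_zero_of_column_eq_zero j (fun i => congrFun hj i)]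
      simp
    by_cases h1 : ∃ j i ε, (ε = (1:ℝ) ∨ ε = -1) ∧
        ∀ i', A i' j = ε * (Pi.single i 1 : Fin (n+1) → ℝ) i'
    · obtain ⟨j₀, i₀, ε, hε, hcol⟩ := h1
      set B := A.submatrix (Equiv.swap 0 i₀) (Equiv.swap 0 j₀) with hB
      have habs : |B.det| = |A.det| := abs_det_submatrix_perm A _ _
      have hBcol0 : ∀ i, B i 0 = ε * (if i = 0 then 1 else 0) := by
        intro i
        have hBi : B i 0 = A (Equiv.swap 0 i₀ i) j₀ := by simp [hB]
        rw [hBi, hcol (Equiv.swap 0 i₀ i)]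
        simp only [Pi.single_apply]
        congr 1
        have : Equiv.swap 0 i₀ i = i₀ ↔ i = 0 := by
          constructor
          · intro hh
            have h2 := congrArg (Equiv.swap 0 i₀) hh
            rwa [Equiv.swap_apply_self, Equiv.swap_apply_right] at h2
          · intro hh; rw [hh]; exact Equiv.swap_apply_left 0 i₀
        simp [this]
      have hdetB : B.det = ε * (B.submatrix (Fin.succAbove 0) Fin.succ).det := by
        rw [Matrix.det_succ_column_zero]
        rw [Finset.sum_eq_single 0]
        · simp [hBcol0 0]
        · intro b _ hb
          rw [hBcol0 b]
          simp [hb]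
        · simp
      have hC : ∀ j, ColOK (fun i => (B.submatrix (Fin.succAbove 0) Fin.succ) i j) := by
        intro j
        have : (fun i => (B.submatrix (Fin.succAbove 0) Fin.succ) i j)
            = (fun i => A i (Equiv.swap 0 j₀ (Fin.succ j))) ∘
              (fun i => Equiv.swap 0 i₀ (Fin.succAbove 0 i)) := rfl
        rw [this]
        exact colOK_comp (hA _)
          ((Equiv.swap 0 i₀).injective.comp (Fin.succAbove_right_injective (p := 0)))
      have hccc := ih (B.submatrix (Fin.succAbove 0) Fin.succ) hC
      calc |A.det| = |B.det| := habs.symm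
        _ = |ε| * |(B.submatrix (Fin.succAbove 0) Fin.succ).det| := by rw [hdetB, abs_mul]
        _ ≤ 1 * 1 := by
            apply mul_le_mul _ hccc (abs_nonneg _) zero_le_one
            rcases hε with rfl | rfl <;> simp
        _ = 1 := by ring
    · -- every column is a difference: ones vector is in the left kernel
      have hsum : ∀ j, ∑ i, A i j = 0 := by
        intro j
        rcases hA j with hz | ⟨i, hi | hi⟩ | ⟨i, i', hii, hc⟩
        · exact absurd hz (fun hh => h0 ⟨j, hh⟩)
        · refine absurd hi (fun hh => h1 ⟨j, i, 1, Or.inl rfl, fun i' => ?_⟩)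
          rw [congrFun hh i']; simp
        · refine absurd hi (fun hh => h1 ⟨j, i, -1, Or.inr rfl, fun i' => ?_⟩)
          rw [congrFun hh i']; simp
        · have heq : ∀ i'', A i'' j = (Pi.single i 1 - Pi.single i' 1 : Fin (n+1) → ℝ) i'' :=
            fun i'' => congrFun hc i''
          simp only [heq, Pi.sub_apply, Finset.sum_sub_distrib]
          rw [Finset.sum_pi_single', Finset.sum_pi_single'] <;> simp
      by_contra hcon
      have hdet : A.det ≠ 0 := by
        intro hh; rw [hh] at hcon; simp at hcon
      have hker : Matrix.vecMul (fun _ => (1:ℝ)) A = 0 := by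
        funext j
        simp [Matrix.vecMul, dotProduct, hsum j]
      have := Matrix.eq_zero_of_vecMul_eq_zero hdet hker
      have h01 := congrFun this 0
      simp at h01

/-! ### Component structure induced by a family of columns in `E_N ∪ F_N` -/

section Setup
variable {N L : ℕ} (ξ : Fin L → Fin N → ℝ)

def edgeRel (m n : Fin N) : Prop :=
  ∃ l, ξ l = Pi.single m 1 - Pi.single n 1 ∨ ξ l = Pi.single n 1 - Pi.single m 1

def cRel : Fin N → Fin N → Prop := Relation.EqvGen (edgeRel ξ)

def isLoop (m : Fin N) : Prop := ∃ l, ξ l = Pi.single m 1 ∨ ξ l = -Pi.single m 1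

def isFree (m : Fin N) : Prop := ∀ n, cRel ξ m n → ¬ isLoop ξ n

open Classical in
noncomputable def cl (m : Fin N) : Finset (Fin N) := univ.filter (cRel ξ m)

open Classical in
noncomputable def freeClasses : Finset (Finset (Fin N)) :=
  (univ.filter (isFree ξ)).image (cl ξ)

lemma cRel_refl (m : Fin N) : cRel ξ m m := Relation.EqvGen.refl m
lemma cRel_symm {m n : Fin N} (h : cRel ξ m n) : cRel ξ n m := Relation.EqvGen.symm _ _ h
lemma cRel_trans {m n p : Fin N} (h : cRel ξ m n) (h' : cRel ξ n p) : cRel ξ m p :=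
  Relation.EqvGen.trans _ _ _ h h'

lemma mem_cl {m n : Fin N} : n ∈ cl ξ m ↔ cRel ξ m n := by classical simp [cl]

lemma mem_cl_self (m : Fin N) : m ∈ cl ξ m := (mem_cl ξ).2 (cRel_refl ξ m)

lemma cl_eq_of_cRel {m n : Fin N} (h : cRel ξ m n) : cl ξ m = cl ξ n := by
  ext p; simp only [mem_cl]
  exact ⟨fun hp => cRel_trans ξ (cRel_symm ξ h) hp, fun hp => cRel_trans ξ h hp⟩

lemma cl_disjoint {m n : Fin N} (h : cl ξ m ≠ cl ξ n) : Disjoint (cl ξ m) (cl ξ n) := by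
  rw [Finset.disjoint_left]
  intro p hp hp'
  exact h (cl_eq_of_cRel ξ ((mem_cl ξ).1 hp) |>.trans (cl_eq_of_cRel ξ ((mem_cl ξ).1 hp')).symm)

lemma freeClasses_mem {T : Finset (Fin N)} (hT : T ∈ freeClasses ξ) :
    ∃ m, isFree ξ m ∧ T = cl ξ m := by
  classical
  simp only [freeClasses, Finset.mem_image, Finset.mem_filter] at hT
  obtain ⟨m, ⟨_, hm⟩, rfl⟩ := hT
  exact ⟨m, hm, rfl⟩

lemma freeClasses_nonempty {T : Finset (Fin N)} (hT : T ∈ freeClasses ξ) : T.Nonempty := by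
  obtain ⟨m, _, rfl⟩ := freeClasses_mem ξ hT
  exact ⟨m, mem_cl_self ξ m⟩

lemma freeClasses_disjoint {T T' : Finset (Fin N)} (hT : T ∈ freeClasses ξ)
    (hT' : T' ∈ freeClasses ξ) (hne : T ≠ T') : Disjoint T T' := by
  obtain ⟨m, _, rfl⟩ := freeClasses_mem ξ hT
  obtain ⟨n, _, rfl⟩ := freeClasses_mem ξ hT'
  exact cl_disjoint ξ hne

lemma cl_mem_freeClasses_of_isFree {m : Fin N} (hm : isFree ξ m) : cl ξ m ∈ freeClasses ξ := by
  classical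
  simp only [freeClasses, Finset.mem_image, Finset.mem_filter]
  exact ⟨m, ⟨Finset.mem_univ m, hm⟩, rfl⟩

lemma sum_card_freeClasses : ∑ T ∈ freeClasses ξ, T.card ≤ N := by
  classical
  rw [← Finset.card_biUnion]
  · calc ((freeClasses ξ).biUnion id).card ≤ (Finset.univ : Finset (Fin N)).card :=
        Finset.card_le_card (Finset.subset_univ _)
      _ = N := by simp
  · intro T hT T' hT' hne
    exact freeClasses_disjoint ξ hT hT' hne

/-- indicator function of a finset -/
def indT {N : ℕ} (T : Finset (Fin N)) : Fin N → ℝ := fun m => if m ∈ T then 1 else 0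

lemma sum_mul_single (w : Fin N → ℝ) (p : Fin N) :
    ∑ m, w m * (Pi.single p 1 : Fin N → ℝ) m = w p := by
  simp only [Pi.single_apply, mul_ite, mul_one, mul_zero]
  rw [Finset.sum_ite_eq' univ p w]; simp

lemma sum_mul_sub_single (w : Fin N → ℝ) (p q : Fin N) :
    ∑ m, w m * (Pi.single p 1 - Pi.single q 1 : Fin N → ℝ) m = w p - w q := by
  simp only [Pi.sub_apply, mul_sub, Finset.sum_sub_distrib]
  rw [sum_mul_single, sum_mul_single]

lemma sum_mul_neg_single (w : Fin N → ℝ) (p : Fin N) :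
    ∑ m, w m * (-Pi.single p 1 : Fin N → ℝ) m = -w p := by
  simp only [Pi.neg_apply, mul_neg, Finset.sum_neg_distrib]
  rw [sum_mul_single]

/-- the indicator of a free class is in the left kernel -/
lemma ind_ker (hξ : ∀ l, ξ l ∈ schE N ∪ schF N) {T : Finset (Fin N)}
    (hT : T ∈ freeClasses ξ) (l : Fin L) :
    ∑ m, indT T m * ξ l m = 0 := by
  classical
  obtain ⟨m₀, hfree, rfl⟩ := freeClasses_mem ξ hT
  rcases hξ l with ⟨p, hp | hp⟩ | ⟨p, q, hpq, hp⟩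
  · rw [hp, sum_mul_single]
    have : p ∉ cl ξ m₀ := by
      rw [mem_cl]
      intro hc
      exact hfree p hc ⟨l, Or.inl hp⟩
    simp [indT, this]
  · rw [hp, sum_mul_neg_single]
    have : p ∉ cl ξ m₀ := by
      rw [mem_cl]
      intro hc
      exact hfree p hc ⟨l, Or.inr hp⟩
    simp [indT, this]
  · rw [hp, sum_mul_sub_single]
    have hedge : edgeRel ξ p q := ⟨l, Or.inl hp⟩
    have : p ∈ cl ξ m₀ ↔ q ∈ cl ξ m₀ := by
      rw [mem_cl, mem_cl]
      exact ⟨fun h => cRel_trans ξ h (Relation.EqvGen.rel _ _ hedge),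
        fun h => cRel_trans ξ h (Relation.EqvGen.symm _ _ (Relation.EqvGen.rel _ _ hedge))⟩
    by_cases hp' : p ∈ cl ξ m₀ <;> simp [indT, hp', this.1, this.2, (this.not).1, ← this]

/-- If the minor on rows `I` is nonzero, every free class meets the complement of `I`. -/
lemma free_meets_compl (hξ : ∀ l, ξ l ∈ schE N ∪ schF N) {I : Finset (Fin N)} (h : I.card = L)
    (hdet : (Matrix.of fun i j => ξ j ((I.orderIsoOfFin h i : Fin N))).det ≠ 0)
    {T : Finset (Fin N)} (hT : T ∈ freeClasses ξ) : ∃ j ∈ T, j ∉ I := by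
  classical
  by_contra hcon
  push_neg at hcon
  have hTI : T ⊆ I := fun j hj => hcon j hj
  set σ := I.orderIsoOfFin h with hσ
  set v : Fin L → ℝ := fun i => indT T (σ i) with hv
  have hvA : Matrix.vecMul v (Matrix.of fun i j => ξ j ((σ i : Fin N))) = 0 := by
    funext l
    have : Matrix.vecMul v (Matrix.of fun i j => ξ j ((σ i : Fin N))) l
        = ∑ i, indT T (σ i) * ξ l (σ i) := by
      simp [Matrix.vecMul, dotProduct, hv]
    rw [this]
    have h1 : ∑ i : Fin L, indT T ((σ i : Fin N)) * ξ l ((σ i : Fin N))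
        = ∑ x ∈ I, indT T x * ξ l x := by
      rw [← Finset.sum_coe_sort I (fun x => indT T x * ξ l x)]
      exact Fintype.sum_equiv σ.toEquiv _ _ (fun i => rfl)
    rw [h1]
    have h2 : ∑ x ∈ I, indT T x * ξ l x = ∑ x, indT T x * ξ l x := by
      apply Finset.sum_subset (Finset.subset_univ I)
      intro x _ hx
      have : x ∉ T := fun hxT => hx (hTI hxT)
      simp [indT, this]
    rw [h2, ind_ker ξ hξ hT l]
    simp
  have hv0 := Matrix.eq_zero_of_vecMul_eq_zero hdet hvA
  obtain ⟨m₀, hfree, rfl⟩ := freeClasses_mem ξ hT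
  have hm₀I : m₀ ∈ I := hTI (mem_cl_self ξ m₀)
  have := congrFun hv0 (σ.symm ⟨m₀, hm₀I⟩)
  rw [hv] at this
  simp only [OrderIso.apply_symm_apply] at this
  rw [indT] at this
  simp [mem_cl_self ξ m₀] at this

lemma sum_mul_single' (w : Fin N → ℝ) (p : Fin N) :
    ∑ m, (Pi.single p 1 : Fin N → ℝ) m * w m = w p := by
  simp only [Pi.single_apply, ite_mul, one_mul, zero_mul]
  rw [Finset.sum_ite_eq' univ p w]; simp

/-- the linear map `w ↦ (l ↦ ∑ m, ξ l m * w m)` -/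
noncomputable def phi : (Fin N → ℝ) →ₗ[ℝ] (Fin L → ℝ) :=
  LinearMap.pi (fun l => ∑ m, (ξ l m) • (LinearMap.proj m : (Fin N → ℝ) →ₗ[ℝ] ℝ))

lemma phi_apply (w : Fin N → ℝ) (l : Fin L) : phi ξ w l = ∑ m, ξ l m * w m := by
  simp [phi, LinearMap.pi_apply, LinearMap.sum_apply]

lemma ker_vanish {w : Fin N → ℝ} (hw : phi ξ w = 0) :
    (∀ m n, cRel ξ m n → w m = w n) ∧ (∀ p, isLoop ξ p → w p = 0) := by
  have hw' : ∀ l, ∑ m, ξ l m * w m = 0 := by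
    intro l
    have := congrFun hw l
    rwa [phi_apply] at this
  constructor
  · intro m n h
    induction h with
    | rel a b hab =>
        obtain ⟨l, hl | hl⟩ := hab
        · have := hw' l
          rw [hl] at this
          simp only [Pi.sub_apply, sub_mul, Finset.sum_sub_distrib,
            sum_mul_single'] at this
          linarith
        · have := hw' l
          rw [hl] at this
          simp only [Pi.sub_apply, sub_mul, Finset.sum_sub_distrib,
            sum_mul_single'] at this
          linarith
    | refl a => rfl
    | symm a b _ ih => exact ih.symm
    | trans a b c _ _ ih1 ih2 => exact ih1.trans ih2
  · intro p hp
    obtain ⟨l, hl | hl⟩ := hp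
    · have := hw' l
      rw [hl] at this
      rwa [sum_mul_single'] at this
    · have := hw' l
      rw [hl] at this
      simp only [Pi.neg_apply, neg_mul, Finset.sum_neg_distrib] at this
      rw [sum_mul_single'] at this
      linarith

lemma card_freeClasses_ge : N - L ≤ (freeClasses ξ).card := by
  classical
  have hrep : ∀ T : {T // T ∈ freeClasses ξ}, ∃ m, isFree ξ m ∧ (T : Finset (Fin N)) = cl ξ m :=
    fun T => freeClasses_mem ξ T.2
  choose rep hrepfree hrepcl using hrep
  set ev : LinearMap.ker (phi ξ) →ₗ[ℝ] ({T // T ∈ freeClasses ξ} → ℝ) :=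
    LinearMap.pi (fun T => (LinearMap.proj (rep T)).comp (LinearMap.ker (phi ξ)).subtype) with hev
  have hinj : Function.Injective ev := by
    rw [injective_iff_map_eq_zero]
    intro w hw0
    have hvals : ∀ T : {T // T ∈ freeClasses ξ}, (w : Fin N → ℝ) (rep T) = 0 := by
      intro T
      have := congrFun hw0 T
      simpa [hev] using this
    have hker := ker_vanish ξ (LinearMap.mem_ker.1 w.2)
    ext m
    simp only [ZeroMemClass.coe_zero, Pi.zero_apply]
    by_cases hm : isFree ξ m
    · have hTm : cl ξ m ∈ freeClasses ξ := cl_mem_freeClasses_of_isFree ξ hm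
      set T : {T // T ∈ freeClasses ξ} := ⟨cl ξ m, hTm⟩
      have hmem : rep T ∈ cl ξ m := by
        have hcc : cl ξ m = cl ξ (rep T) := hrepcl T
        rw [hcc]
        exact mem_cl_self ξ (rep T)
      rw [hker.1 m (rep T) ((mem_cl ξ).1 hmem)]
      exact hvals T
    · unfold isFree at hm
      push_neg at hm
      obtain ⟨n, hmn, hn⟩ := hm
      rw [hker.1 m n hmn, hker.2 n hn]
  have h1 : Module.finrank ℝ (LinearMap.ker (phi ξ)) ≤ (freeClasses ξ).card := by
    have := LinearMap.finrank_le_finrank_of_injective hinj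
    simpa [Fintype.card_coe] using this
  have h2 : N ≤ L + Module.finrank ℝ (LinearMap.ker (phi ξ)) := by
    have hrn := LinearMap.finrank_range_add_finrank_ker (phi ξ)
    have hr : Module.finrank ℝ (LinearMap.range (phi ξ)) ≤ L := by
      have := Submodule.finrank_le (LinearMap.range (phi ξ))
      simpa using this
    have hN : Module.finrank ℝ (Fin N → ℝ) = N := by simp
    rw [hN] at hrn
    omega
  omega

/-! ### Counting the nonvanishing minors -/

noncomputable def minorDet (x : Fin L → Fin N → ℝ) (I : Finset (Fin N)) : ℝ :=
  if h : I.card = L then (Matrix.of fun i j => x j ((I.orderIsoOfFin h i : Fin N))).det else 0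

open Classical in
noncomputable def validSet : Finset (Finset (Fin N)) :=
  univ.filter (fun I => minorDet ξ I ≠ 0)

lemma validSet_card_eq {I : Finset (Fin N)} (hI : I ∈ validSet ξ) : I.card = L := by
  classical
  simp only [validSet, Finset.mem_filter] at hI
  by_contra h
  exact hI.2 (by simp [minorDet, h])

lemma free_meets_compl' (hξ : ∀ l, ξ l ∈ schE N ∪ schF N) {I : Finset (Fin N)}
    (hdet : minorDet ξ I ≠ 0) {T : Finset (Fin N)} (hT : T ∈ freeClasses ξ) :
    ∃ j ∈ T, j ∉ I := by
  unfold minorDet at hdet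
  split at hdet
  · next h => exact free_meets_compl ξ hξ h hdet hT
  · exact absurd rfl hdet

open Classical in
noncomputable def pickf (I : Finset (Fin N)) : ∀ T ∈ freeClasses ξ, Fin N :=
  fun T hT => if h : (T \ I).Nonempty then (T \ I).min' h else T.min' (freeClasses_nonempty ξ hT)

lemma pickf_mem {I T : Finset (Fin N)} (hT : T ∈ freeClasses ξ) : pickf ξ I T hT ∈ T := by
  classical
  unfold pickf
  split
  · next h => exact (Finset.mem_sdiff.1 ((T \ I).min'_mem h)).1
  · exact T.min'_mem _

lemma pickf_not_mem (hξ : ∀ l, ξ l ∈ schE N ∪ schF N) {I T : Finset (Fin N)}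
    (hI : I ∈ validSet ξ) (hT : T ∈ freeClasses ξ) :
    pickf ξ I T hT ∉ I := by
  classical
  have hdet : minorDet ξ I ≠ 0 := by
    simp only [validSet, Finset.mem_filter] at hI; exact hI.2
  obtain ⟨j, hjT, hjI⟩ := free_meets_compl' ξ hξ hdet hT
  have hne : (T \ I).Nonempty := ⟨j, Finset.mem_sdiff.2 ⟨hjT, hjI⟩⟩
  unfold pickf
  rw [dif_pos hne]
  exact (Finset.mem_sdiff.1 ((T \ I).min'_mem hne)).2

lemma pickf_injOn {I : Finset (Fin N)} :
    Set.InjOn (fun T : {T // T ∈ freeClasses ξ} => pickf ξ I T.1 T.2)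
      ((freeClasses ξ).attach : Set _) := by
  intro T _ T' _ hTT'
  by_contra hne
  have hne' : T.1 ≠ T'.1 := fun h => hne (Subtype.ext h)
  have hd := freeClasses_disjoint ξ T.2 T'.2 hne'
  have h1 : pickf ξ I T.1 T.2 ∈ T.1 := pickf_mem ξ T.2
  have h2 : pickf ξ I T.1 T.2 ∈ T'.1 := by
    have : pickf ξ I T.1 T.2 = pickf ξ I T'.1 T'.2 := hTT'
    rw [this]
    exact pickf_mem ξ T'.2
  exact (Finset.disjoint_left.1 hd) h1 h2

lemma card_freeClasses_le (hξ : ∀ l, ξ l ∈ schE N ∪ schF N) {I : Finset (Fin N)}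
    (hI : I ∈ validSet ξ) : (freeClasses ξ).card ≤ N - L := by
  classical
  have hmaps : ∀ T ∈ (freeClasses ξ).attach, pickf ξ I T.1 T.2 ∈ Iᶜ := by
    intro T _
    simpa [Finset.mem_compl] using pickf_not_mem ξ hξ hI T.2
  have := Finset.card_le_card_of_injOn (fun T : {T // T ∈ freeClasses ξ} => pickf ξ I T.1 T.2)
    hmaps (pickf_injOn ξ)
  rw [Finset.card_attach] at this
  calc (freeClasses ξ).card ≤ (Iᶜ).card := this
    _ = N - L := by rw [Finset.card_compl, validSet_card_eq ξ hI]; simp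

lemma compl_eq_image (hξ : ∀ l, ξ l ∈ schE N ∪ schF N)
    (hcard : (freeClasses ξ).card = N - L)
    {I : Finset (Fin N)} (hI : I ∈ validSet ξ) :
    Iᶜ = (freeClasses ξ).attach.image (fun T => pickf ξ I T.1 T.2) := by
  classical
  have hsub : (freeClasses ξ).attach.image (fun T => pickf ξ I T.1 T.2) ⊆ Iᶜ := by
    intro j hj
    simp only [Finset.mem_image, Finset.mem_attach, true_and, Subtype.exists] at hj
    obtain ⟨T, hT, rfl⟩ := hj
    simpa [Finset.mem_compl] using pickf_not_mem ξ hξ hI hT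
  have hcardim : ((freeClasses ξ).attach.image (fun T => pickf ξ I T.1 T.2)).card
      = N - L := by
    rw [Finset.card_image_of_injOn (pickf_injOn ξ), Finset.card_attach, hcard]
  have hcardcompl : (Iᶜ).card = N - L := by
    rw [Finset.card_compl, validSet_card_eq ξ hI]
    simp
  exact (Finset.eq_of_subset_of_card_le hsub (by rw [hcardim, hcardcompl])).symm

lemma validSet_card_le (hξ : ∀ l, ξ l ∈ schE N ∪ schF N)
    (hcard : (freeClasses ξ).card = N - L) :
    (validSet ξ).card ≤ ∏ T ∈ freeClasses ξ, T.card := by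
  classical
  have := Finset.card_le_card_of_injOn (s := validSet ξ) (f := fun I => pickf ξ I)
    (t := (freeClasses ξ).pi (fun T => T)) ?_ ?_
  · simpa [Finset.card_pi] using this
  · intro I _
    rw [Finset.mem_coe, Finset.mem_pi]
    intro T hT
    exact pickf_mem ξ hT
  · intro I hI I' hI' heq
    have h1 := compl_eq_image ξ hξ hcard hI
    have h2 := compl_eq_image ξ hξ hcard hI'
    have : Iᶜ = I'ᶜ := by
      rw [h1, h2]
      congr 1
      funext T
      exact congrFun (congrFun heq T.1) T.2
    have := congrArg (·ᶜ) this
    simpa using this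

end Setup

/-! ### AM-GM -/

set_option linter.deprecated false in
lemma prod_le_div_pow {α : Type*} (s : Finset α) (t : α → ℕ) (K n : ℕ)
    (hcard : s.card = K) (hK : 1 ≤ K) (hsum : ∑ i ∈ s, t i ≤ n) :
    ∏ i ∈ s, (t i : ℝ) ≤ ((n : ℝ) / (K : ℝ)) ^ K := by
  have hK0 : (0:ℝ) < (K:ℝ) := by exact_mod_cast hK
  have hgeom := Real.geom_mean_le_arith_mean_weighted s (fun _ => (K:ℝ)⁻¹)
    (fun i => (t i : ℝ)) (fun i _ => by positivity) (by
      rw [Finset.sum_const, hcard, nsmul_eq_mul]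
      field_simp) (fun i _ => by positivity)
  have harith : ∑ i ∈ s, (K:ℝ)⁻¹ * (t i : ℝ) ≤ (n : ℝ) / (K : ℝ) := by
    rw [← Finset.mul_sum, div_eq_inv_mul]
    apply mul_le_mul_of_nonneg_left _ (by positivity)
    exact_mod_cast hsum
  have hprod : (∏ i ∈ s, ((t i : ℝ) ^ ((K:ℝ)⁻¹ : ℝ))) ^ K = ∏ i ∈ s, (t i : ℝ) := by
    rw [← Finset.prod_pow]
    apply Finset.prod_congr rfl
    intro i _
    rw [← Real.rpow_natCast ((t i : ℝ) ^ ((K:ℝ)⁻¹ : ℝ)) K, ← Real.rpow_mul (by positivity)]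
    rw [inv_mul_cancel₀ (ne_of_gt hK0), Real.rpow_one]
  calc ∏ i ∈ s, (t i : ℝ) = (∏ i ∈ s, ((t i : ℝ) ^ ((K:ℝ)⁻¹ : ℝ))) ^ K := hprod.symm
    _ ≤ ((n : ℝ) / (K : ℝ)) ^ K := by
        apply pow_le_pow_left₀ (Finset.prod_nonneg (fun i _ => by positivity))
        exact le_trans hgeom harith

/-! ### Part 1 -/

section Part1
variable {N L : ℕ}

lemma colOK_of_mem {x : Fin N → ℝ} (hx : x ∈ schE N ∪ schF N) : ColOK x := by
  rcases hx with ⟨m, hm | hm⟩ | ⟨m, n, hmn, hm⟩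
  · exact Or.inr (Or.inl ⟨m, Or.inl hm⟩)
  · exact Or.inr (Or.inl ⟨m, Or.inr hm⟩)
  · exact Or.inr (Or.inr ⟨m, n, hmn, hm⟩)

lemma wedgeL1_eq_sum_minor (x : Fin L → Fin N → ℝ) :
    wedgeL1 x = ∑ I : Finset (Fin N), |minorDet x I| := by
  unfold wedgeL1 minorDet
  apply Finset.sum_congr rfl
  intro I _
  by_cases h : I.card = L
  · rw [dif_pos h, dif_pos h]
  · rw [dif_neg h, dif_neg h, abs_zero]

lemma abs_minorDet_le (x : Fin L → Fin N → ℝ) (hx : ∀ l, x l ∈ schE N ∪ schF N)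
    (I : Finset (Fin N)) : |minorDet x I| ≤ 1 := by
  unfold minorDet
  split
  · next h =>
    apply tu_det
    intro j
    have : (fun i => (Matrix.of fun i j => x j ((I.orderIsoOfFin h i : Fin N))) i j)
        = (x j) ∘ (fun i => ((I.orderIsoOfFin h i : Fin N))) := rfl
    rw [this]
    apply colOK_comp (colOK_of_mem (hx j))
    intro a b hab
    exact (I.orderIsoOfFin h).injective (Subtype.ext hab)
  · simp

lemma part1 (h1 : L < N) (ξ : Fin L → Fin N → ℝ)
    (hξ : ∀ l, ξ l ∈ schE N ∪ schF N) :
    wedgeL1 ξ ≤ ((N : ℝ) / ((N : ℝ) - (L : ℝ))) ^ (N - L) := by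
  classical
  have hcast : (N:ℝ) - (L:ℝ) = ((N - L : ℕ) : ℝ) := by
    rw [Nat.cast_sub h1.le]
  rw [hcast]
  have hbound : wedgeL1 ξ ≤ ((validSet ξ).card : ℝ) := by
    rw [wedgeL1_eq_sum_minor]
    have hz : ∑ I : Finset (Fin N), |minorDet ξ I| = ∑ I ∈ validSet ξ, |minorDet ξ I| := by
      symm
      apply Finset.sum_subset (Finset.subset_univ _)
      intro I _ hI
      simp only [validSet, Finset.mem_filter, Finset.mem_univ, true_and, not_not] at hI
      rw [hI, abs_zero]
    rw [hz]
    calc ∑ I ∈ validSet ξ, |minorDet ξ I| ≤ ∑ _I ∈ validSet ξ, (1:ℝ) :=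
          Finset.sum_le_sum (fun I _ => abs_minorDet_le ξ hξ I)
      _ = ((validSet ξ).card : ℝ) := by simp
  rcases (validSet ξ).eq_empty_or_nonempty with hemp | ⟨I, hI⟩
  · have : wedgeL1 ξ ≤ 0 := by
      rw [hemp] at hbound
      simpa using hbound
    apply le_trans this
    positivity
  · have hcard : (freeClasses ξ).card = N - L :=
      le_antisymm (card_freeClasses_le ξ hξ hI) (card_freeClasses_ge ξ)
    have hc1 : ((validSet ξ).card : ℝ) ≤ ∏ T ∈ freeClasses ξ, (T.card : ℝ) := by
      rw [← Nat.cast_prod]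
      exact_mod_cast validSet_card_le ξ hξ hcard
    have hc2 : ∏ T ∈ freeClasses ξ, (T.card : ℝ)
        ≤ ((N : ℝ) / ((N - L : ℕ) : ℝ)) ^ (N - L) :=
      prod_le_div_pow (freeClasses ξ) Finset.card (N - L) N hcard (by omega)
        (sum_card_freeClasses ξ)
    exact le_trans hbound (le_trans hc1 hc2)

end Part1

/-! ### Convexity of `wedgeL1` in each column -/

section Convex
variable {N L : ℕ}

lemma update_matrix_eq (x : Fin L → Fin N → ℝ) (l : Fin L) (y : Fin N → ℝ)
    {I : Finset (Fin N)} (h : I.card = L) :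
    (Matrix.of fun i j => (Function.update x l y) j ((I.orderIsoOfFin h i : Fin N)))
      = (Matrix.of fun i j => x j ((I.orderIsoOfFin h i : Fin N))).updateCol l
          (fun i => y ((I.orderIsoOfFin h i : Fin N))) := by
  classical
  ext i j
  simp only [Matrix.of_apply, Matrix.updateCol_apply, Function.update]
  by_cases hj : j = l <;> simp [hj]

lemma wedgeL1_nonneg (x : Fin L → Fin N → ℝ) : 0 ≤ wedgeL1 x := by
  apply Finset.sum_nonneg
  intro I _
  split <;> simp [abs_nonneg]

lemma wedgeL1_update_add (x : Fin L → Fin N → ℝ) (l : Fin L) (u v : Fin N → ℝ) :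
    wedgeL1 (Function.update x l (u + v)) ≤
      wedgeL1 (Function.update x l u) + wedgeL1 (Function.update x l v) := by
  unfold wedgeL1
  rw [← Finset.sum_add_distrib]
  apply Finset.sum_le_sum
  intro I _
  by_cases h : I.card = L
  · rw [dif_pos h, dif_pos h, dif_pos h, update_matrix_eq, update_matrix_eq, update_matrix_eq]
    have : (fun i => (u + v) ((I.orderIsoOfFin h i : Fin N)))
        = (fun i => u ((I.orderIsoOfFin h i : Fin N)))
          + fun i => v ((I.orderIsoOfFin h i : Fin N)) := rfl
    rw [this, Matrix.det_updateCol_add]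
    exact abs_add_le _ _
  · simp [h]

lemma wedgeL1_update_smul (x : Fin L → Fin N → ℝ) (l : Fin L) (c : ℝ) (u : Fin N → ℝ) :
    wedgeL1 (Function.update x l (c • u)) = |c| * wedgeL1 (Function.update x l u) := by
  unfold wedgeL1
  rw [Finset.mul_sum]
  apply Finset.sum_congr rfl
  intro I _
  by_cases h : I.card = L
  · rw [dif_pos h, dif_pos h, update_matrix_eq, update_matrix_eq]
    have : (fun i => (c • u) ((I.orderIsoOfFin h i : Fin N)))
        = c • fun i => u ((I.orderIsoOfFin h i : Fin N)) := rfl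
    rw [this, Matrix.det_updateCol_smul, abs_mul]
  · simp [h]

lemma wedgeL1_update_convexOn (x : Fin L → Fin N → ℝ) (l : Fin L) :
    ConvexOn ℝ Set.univ (fun y => wedgeL1 (Function.update x l y)) := by
  refine ⟨convex_univ, ?_⟩
  intro u _ v _ a b ha hb _
  calc wedgeL1 (Function.update x l (a • u + b • v))
      ≤ wedgeL1 (Function.update x l (a • u)) + wedgeL1 (Function.update x l (b • v)) :=
        wedgeL1_update_add x l _ _
    _ = a * wedgeL1 (Function.update x l u) + b * wedgeL1 (Function.update x l v) := by
        rw [wedgeL1_update_smul, wedgeL1_update_smul, abs_of_nonneg ha, abs_of_nonneg hb]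
    _ = a • wedgeL1 (Function.update x l u) + b • wedgeL1 (Function.update x l v) := by
        simp [smul_eq_mul]

lemma wedgeL1_smul_cols (c : Fin L → ℝ) (x : Fin L → Fin N → ℝ) :
    wedgeL1 (fun l => c l • x l) = (∏ l, |c l|) * wedgeL1 x := by
  unfold wedgeL1
  rw [Finset.mul_sum]
  apply Finset.sum_congr rfl
  intro I _
  by_cases h : I.card = L
  · rw [dif_pos h, dif_pos h]
    have : (Matrix.of fun i j => (c j • x j) ((I.orderIsoOfFin h i : Fin N)))
        = Matrix.of (fun i j => c j
            * (Matrix.of fun i j => x j ((I.orderIsoOfFin h i : Fin N))) i j) := rfl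
    rw [this]
    have h2 := Matrix.det_mul_row c (Matrix.of fun i j => x j ((I.orderIsoOfFin h i : Fin N)))
    rw [h2, abs_mul, Finset.abs_prod]
  · simp [h]

lemma wedgeL1_zero_col (x : Fin L → Fin N → ℝ) (l : Fin L) (hl : x l = 0) :
    wedgeL1 x = 0 := by
  unfold wedgeL1
  apply Finset.sum_eq_zero
  intro I _
  by_cases h : I.card = L
  · rw [dif_pos h]
    have : (Matrix.of fun i j => x j ((I.orderIsoOfFin h i : Fin N))).det = 0 := by
      apply Matrix.det_eq_zero_of_column_eq_zero l
      intro i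
      simp [hl]
    rw [this]
    exact abs_zero
  · simp [h]

end Convex

/-! ### Properties of the Schinzel norm and the convex hull of `E_N ∪ F_N` -/

section Delta
variable {N : ℕ}

lemma sum_pos_le_delta (x : Fin N → ℝ) : ∑ m, max (x m) 0 ≤ schinzelDelta x := le_max_left _ _
lemma sum_neg_le_delta (x : Fin N → ℝ) : ∑ m, max (-(x m)) 0 ≤ schinzelDelta x := le_max_right _ _

lemma schinzelDelta_nonneg (x : Fin N → ℝ) : 0 ≤ schinzelDelta x :=
  le_trans (Finset.sum_nonneg (fun m _ => le_max_right _ _)) (le_max_left _ _)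

lemma schinzelDelta_smul (c : ℝ) (hc : 0 ≤ c) (x : Fin N → ℝ) :
    schinzelDelta (c • x) = c * schinzelDelta x := by
  unfold schinzelDelta
  rw [mul_max_of_nonneg _ _ hc, Finset.mul_sum, Finset.mul_sum]
  congr 1 <;> ·
    apply Finset.sum_congr rfl
    intro m _
    rw [mul_max_of_nonneg _ _ hc]
    simp [mul_comm]

lemma eq_zero_of_schinzelDelta_eq_zero {x : Fin N → ℝ} (h : schinzelDelta x = 0) : x = 0 := by
  have h1 : ∑ m, max (x m) 0 ≤ 0 := h ▸ sum_pos_le_delta x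
  have h2 : ∑ m, max (-(x m)) 0 ≤ 0 := h ▸ sum_neg_le_delta x
  have e1 : ∀ m ∈ Finset.univ, max (x m) 0 = 0 :=
    (Finset.sum_eq_zero_iff_of_nonneg (fun m _ => le_max_right _ _)).1
      (le_antisymm h1 (Finset.sum_nonneg fun m _ => le_max_right _ _))
  have e2 : ∀ m ∈ Finset.univ, max (-(x m)) 0 = 0 :=
    (Finset.sum_eq_zero_iff_of_nonneg (fun m _ => le_max_right _ _)).1
      (le_antisymm h2 (Finset.sum_nonneg fun m _ => le_max_right _ _))
  funext m
  have ha := e1 m (Finset.mem_univ m)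
  have hb := e2 m (Finset.mem_univ m)
  rw [max_eq_iff] at ha hb
  have hle : x m ≤ 0 := by rcases ha with ⟨h, _⟩ | ⟨_, h⟩ <;> linarith
  have hge : 0 ≤ x m := by rcases hb with ⟨h, _⟩ | ⟨_, h⟩ <;> linarith
  simp only [Pi.zero_apply]
  linarith

lemma schEF_finite (N : ℕ) : (schE N ∪ schF N).Finite := by
  apply Set.Finite.union
  · apply Set.Finite.subset (Set.Finite.union
      (Set.finite_range (fun m : Fin N => (Pi.single m 1 : Fin N → ℝ)))
      (Set.finite_range (fun m : Fin N => (-Pi.single m 1 : Fin N → ℝ))))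
    rintro x ⟨m, hm | hm⟩
    · exact Or.inl ⟨m, hm.symm⟩
    · exact Or.inr ⟨m, hm.symm⟩
  · apply Set.Finite.subset (Set.finite_range
      (fun p : Fin N × Fin N => (Pi.single p.1 1 - Pi.single p.2 1 : Fin N → ℝ)))
    rintro x ⟨m, n, _, hm⟩
    exact ⟨(m, n), hm.symm⟩

lemma mem_hull_of_delta_le_one (hN : 0 < N) (x : Fin N → ℝ) (hx : schinzelDelta x ≤ 1) :
    x ∈ convexHull ℝ (schE N ∪ schF N) := by
  classical
  by_contra hcon
  have : Nonempty (Fin N) := Fin.pos_iff_nonempty.mp hN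
  have hclosed : IsClosed (convexHull ℝ (schE N ∪ schF N)) :=
    (schEF_finite N).isClosed_convexHull ℝ
  obtain ⟨f, u, hfu, hux⟩ :=
    geometric_hahn_banach_closed_point (convex_convexHull ℝ _) hclosed hcon
  set φ : Fin N → ℝ := fun m => f (Pi.single m 1) with hφ
  have hfx : f x = ∑ m, x m * φ m := by
    have hxsum : x = ∑ m, x m • (Pi.single m 1 : Fin N → ℝ) := by
      funext j
      rw [Finset.sum_apply]
      simp only [Pi.smul_apply, Pi.single_apply, smul_eq_mul, mul_ite, mul_one, mul_zero]
      rw [Finset.sum_ite_eq univ j x]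
      simp
    calc f x = f (∑ m, x m • (Pi.single m 1 : Fin N → ℝ)) := by rw [← hxsum]
      _ = ∑ m, x m * φ m := by
          rw [map_sum]
          apply Finset.sum_congr rfl
          intro m _
          rw [map_smul]
          rfl
  obtain ⟨m₀, _, hm₀⟩ := Finset.exists_max_image univ φ ⟨Classical.arbitrary _, Finset.mem_univ _⟩
  obtain ⟨m₁, _, hm₁⟩ := Finset.exists_min_image univ φ ⟨Classical.arbitrary _, Finset.mem_univ _⟩
  set A := max (φ m₀) 0 with hA
  set B := max (-(φ m₁)) 0 with hB
  have hA0 : 0 ≤ A := le_max_right _ _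
  have hB0 : 0 ≤ B := le_max_right _ _
  have hfxle : f x ≤ A + B := by
    rw [hfx]
    have hpt : ∀ m, x m * φ m ≤ max (x m) 0 * A + max (-(x m)) 0 * B := by
      intro m
      rcases le_or_gt 0 (x m) with hxm | hxm
      · have h1 : x m * φ m ≤ x m * A :=
          mul_le_mul_of_nonneg_left (le_trans (hm₀ m (Finset.mem_univ m)) (le_max_left _ _)) hxm
        have h2 : max (x m) 0 = x m := max_eq_left hxm
        nlinarith [mul_nonneg (le_max_right (-(x m)) 0 : (0:ℝ) ≤ max (-(x m)) 0) hB0]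
      · have h1 : x m * φ m = (-(x m)) * (-(φ m)) := by ring
        have h2 : (-(x m)) * (-(φ m)) ≤ (-(x m)) * B := by
          apply mul_le_mul_of_nonneg_left _ (by linarith)
          exact le_trans (neg_le_neg (hm₁ m (Finset.mem_univ m))) (le_max_left _ _)
        have h3 : max (-(x m)) 0 = -(x m) := max_eq_left (by linarith)
        have h4 : max (x m) 0 = 0 := max_eq_right (by linarith)
        nlinarith
    calc ∑ m, x m * φ m ≤ ∑ m, (max (x m) 0 * A + max (-(x m)) 0 * B) :=
          Finset.sum_le_sum (fun m _ => hpt m)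
      _ = (∑ m, max (x m) 0) * A + (∑ m, max (-(x m)) 0) * B := by
          rw [Finset.sum_add_distrib, ← Finset.sum_mul, ← Finset.sum_mul]
      _ ≤ 1 * A + 1 * B := by
          apply add_le_add <;> apply mul_le_mul_of_nonneg_right _ ‹_›
          · exact le_trans (sum_pos_le_delta x) hx
          · exact le_trans (sum_neg_le_delta x) hx
      _ = A + B := by ring
  have hexists : ∃ a ∈ schE N ∪ schF N, A + B ≤ f a := by
    rcases lt_or_ge 0 (φ m₀) with hA' | hA' <;> rcases lt_or_ge (φ m₁) 0 with hB' | hB'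
    · have hne : m₀ ≠ m₁ := by
        intro h; rw [h] at hA'; linarith
      refine ⟨Pi.single m₀ 1 - Pi.single m₁ 1, Or.inr ⟨m₀, m₁, hne, rfl⟩, ?_⟩
      rw [map_sub]
      rw [hA, hB, max_eq_left hA'.le, max_eq_left (by linarith)]
      simp [hφ]
    · refine ⟨Pi.single m₀ 1, Or.inl ⟨m₀, Or.inl rfl⟩, ?_⟩
      rw [hA, hB, max_eq_left hA'.le, max_eq_right (by linarith)]
      simp [hφ]
    · refine ⟨-Pi.single m₁ 1, Or.inl ⟨m₁, Or.inr rfl⟩, ?_⟩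
      rw [map_neg, hA, hB, max_eq_right hA', max_eq_left (by linarith)]
      simp [hφ]
    · refine ⟨Pi.single m₀ 1, Or.inl ⟨m₀, Or.inl rfl⟩, ?_⟩
      rw [hA, hB, max_eq_right hA', max_eq_right (by linarith)]
      have hle : φ m₁ ≤ φ m₀ := hm₁ m₀ (Finset.mem_univ m₀)
      have heq : f (Pi.single m₀ 1) = φ m₀ := rfl
      linarith
  obtain ⟨a, ha, hfa⟩ := hexists
  have hlt : f a < u := hfu a (subset_convexHull ℝ _ ha)
  linarith

end Delta

/-! ### Part 2 -/

section Part2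
variable {N L : ℕ}

lemma hull_bound (h1 : L < N) (h2 : N ≤ 2 * L) :
    ∀ z : Fin L → Fin N → ℝ, (∀ l, z l ∈ convexHull ℝ (schE N ∪ schF N)) →
      wedgeL1 z ≤ ((N : ℝ) / ((N : ℝ) - (L : ℝ))) ^ (N - L) := by
  have main : ∀ j : ℕ, ∀ z : Fin L → Fin N → ℝ,
      (∀ l : Fin L, (l : ℕ) < L - j → z l ∈ schE N ∪ schF N) →
      (∀ l, z l ∈ convexHull ℝ (schE N ∪ schF N)) →
      wedgeL1 z ≤ ((N : ℝ) / ((N : ℝ) - (L : ℝ))) ^ (N - L) := by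
    intro j
    induction j with
    | zero =>
      intro z hzs _
      exact part1 h1 z (fun l => hzs l (by omega))
    | succ j ih =>
      intro z hzs hzh
      by_cases hjL : L ≤ j
      · exact ih z (fun l hl => absurd hl (by omega)) hzh
      · push_neg at hjL
        have hL0 : 0 < L := by omega
        set p : Fin L := ⟨L - (j + 1), by omega⟩ with hp
        have hconv : ConvexOn ℝ (convexHull ℝ (schE N ∪ schF N))
            (fun y => wedgeL1 (Function.update z p y)) :=
          (wedgeL1_update_convexOn z p).subset (Set.subset_univ _)
            (convex_convexHull ℝ _)
        obtain ⟨a, ha, hle⟩ := hconv.exists_ge_of_mem_convexHull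
          (subset_convexHull ℝ _) (hzh p)
        have hupd : Function.update z p (z p) = z := Function.update_eq_self p z
        have hle' : wedgeL1 z ≤ wedgeL1 (Function.update z p a) := by
          have hzz : wedgeL1 z = wedgeL1 (Function.update z p (z p)) := by rw [hupd]
          rw [hzz]
          exact hle
        apply le_trans hle'
        apply ih (Function.update z p a)
        · intro l hl
          by_cases hlp : l = p
          · rw [hlp, Function.update_self]
            exact ha
          · rw [Function.update_of_ne hlp]
            apply hzs
            have : (l : ℕ) ≠ L - (j + 1) := by
              intro h
              apply hlp
              apply Fin.ext
              rw [h, hp]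
            omega
        · intro l
          by_cases hlp : l = p
          · rw [hlp, Function.update_self]
            exact subset_convexHull ℝ _ ha
          · rw [Function.update_of_ne hlp]
            exact hzh l
  intro z hz
  exact main L z (fun l hl => absurd hl (by omega)) hz

lemma part2 (h1 : L < N) (h2 : N ≤ 2 * L) (x : Fin L → Fin N → ℝ) :
    wedgeL1 x ≤ ((N : ℝ) / ((N : ℝ) - (L : ℝ))) ^ (N - L) * ∏ l, schinzelDelta (x l) := by
  classical
  set C := ((N : ℝ) / ((N : ℝ) - (L : ℝ))) ^ (N - L) with hC
  have hC0 : 0 ≤ C := by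
    rw [hC]
    apply pow_nonneg
    apply div_nonneg (by positivity)
    rw [show (N:ℝ) - (L:ℝ) = ((N - L : ℕ) : ℝ) by rw [Nat.cast_sub h1.le]]
    positivity
  by_cases hzero : ∃ l, schinzelDelta (x l) = 0
  · obtain ⟨l, hl⟩ := hzero
    have hx0 : x l = 0 := eq_zero_of_schinzelDelta_eq_zero hl
    rw [wedgeL1_zero_col x l hx0]
    rw [Finset.prod_eq_zero (Finset.mem_univ l) hl, mul_zero]
  · push_neg at hzero
    have hdpos : ∀ l, 0 < schinzelDelta (x l) :=
      fun l => lt_of_le_of_ne (schinzelDelta_nonneg (x l)) (Ne.symm (hzero l))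
    set d : Fin L → ℝ := fun l => schinzelDelta (x l) with hd
    set y : Fin L → Fin N → ℝ := fun l => (d l)⁻¹ • x l with hy
    have hxy : x = fun l => d l • y l := by
      funext l
      rw [hy]
      simp only []
      rw [smul_inv_smul₀ (ne_of_gt (hdpos l))]
    have hdy : ∀ l, schinzelDelta (y l) = 1 := by
      intro l
      rw [hy]
      simp only []
      rw [schinzelDelta_smul _ (inv_nonneg.2 (hdpos l).le)]
      rw [inv_mul_cancel₀ (ne_of_gt (hdpos l))]
    have hyh : ∀ l, y l ∈ convexHull ℝ (schE N ∪ schF N) := by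
      intro l
      exact mem_hull_of_delta_le_one (by omega) (y l) (le_of_eq (hdy l))
    have hwy : wedgeL1 y ≤ C := hull_bound h1 h2 y hyh
    have hcalc : wedgeL1 x = (∏ l, d l) * wedgeL1 y := by
      rw [hxy, wedgeL1_smul_cols]
      congr 1
      apply Finset.prod_congr rfl
      intro l _
      exact abs_of_pos (hdpos l)
    rw [hcalc]
    have hprod0 : 0 ≤ ∏ l, d l := Finset.prod_nonneg (fun l _ => (hdpos l).le)
    calc (∏ l, d l) * wedgeL1 y ≤ (∏ l, d l) * C :=
          mul_le_mul_of_nonneg_left hwy hprod0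
      _ = C * ∏ l, schinzelDelta (x l) := by rw [mul_comm]

end Part2

/-- If `L < N ≤ 2L` then `‖ξ₁ ∧ ⋯ ∧ ξ_L‖₁ ≤ (N/(N−L))^{N−L}` for vectors
`ξ₁,…,ξ_L ∈ E_N ∪ F_N`, and consequently
`‖x₁ ∧ ⋯ ∧ x_L‖₁ ≤ (N/(N−L))^{N−L} δ(x₁)⋯δ(x_L)` for all `x₁,…,x_L ∈ ℝ^N`. -/
theorem stmt17 (N L : ℕ) (h1 : L < N) (h2 : N ≤ 2 * L) :
    (∀ ξ : Fin L → Fin N → ℝ, (∀ l, ξ l ∈ schE N ∪ schF N) →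
      wedgeL1 ξ ≤ ((N : ℝ) / ((N : ℝ) - (L : ℝ))) ^ (N - L)) ∧
    (∀ x : Fin L → Fin N → ℝ,
      wedgeL1 x ≤ ((N : ℝ) / ((N : ℝ) - (L : ℝ))) ^ (N - L) *
        ∏ l, schinzelDelta (x l)) := by
  exact ⟨fun ξ hξ => part1 h1 ξ hξ, fun x => part2 h1 h2 x⟩
end
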